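/- arXiv:1707.02814 — 4 statements merged into one kernel-verified Lean document; each statement's English description precedes it below -/
import Mathlib

section
/- Let N be the partition matroid on [n] with connected components C_1, …, C_k where the restriction to C_ℓ is uniform of rank d_ℓ with 0 < d_ℓ < |C_ℓ|. For a permutation giving the order C_1, …, C_k, let M be the nested matroid whose bases are the d-subsets S with Σ_{ℓ=1}^h |S ∩ C_ℓ| ≤ Σ_{ℓ=1}^h d_ℓ for all h < k, where d = Σ d_ℓ. Then M is a connected matroid and its cyclic flats are exactly the k+1 sets ∅, C_1, C_1∪C_2, …, C_1∪…∪C_k = [n], of ranks 0, d_1, d_1+d_2, …, d. -/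
/-- Bases of the nested matroid determined by the ordered components
`C 0 ≺ … ≺ C (k-1)` with ranks `dd`: the `(∑ dd)`-sets whose partial sums of
intersections with the prefix components are bounded by the partial sums of
the ranks. -/
def NestedBase (n k : ℕ) (C : Fin k → Finset (Fin n)) (dd : Fin k → ℕ)
    (S : Finset (Fin n)) : Prop :=
  S.card = (∑ ℓ, dd ℓ) ∧ ∀ h : ℕ, h < k →
    (∑ ℓ ∈ Finset.univ.filter (fun ℓ : Fin k => (ℓ : ℕ) < h), (S ∩ C ℓ).card)
      ≤ ∑ ℓ ∈ Finset.univ.filter (fun ℓ : Fin k => (ℓ : ℕ) < h), dd ℓ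

/-- The rank of a set `A` in the nested matroid: the maximal size of the
intersection of a basis with `A`. -/
noncomputable def NestedRank (n k : ℕ) (C : Fin k → Finset (Fin n))
    (dd : Fin k → ℕ) (A : Finset (Fin n)) : ℕ :=
  sSup {m | ∃ B, NestedBase n k C dd B ∧ (B ∩ A).card = m}

/-- `A` is a flat of the nested matroid: adding any element increases rank. -/
def NestedFlat (n k : ℕ) (C : Fin k → Finset (Fin n)) (dd : Fin k → ℕ)
    (A : Finset (Fin n)) : Prop :=
  ∀ e ∉ A, NestedRank n k C dd A < NestedRank n k C dd (insert e A)

/-- `A` is cyclic: the restriction to `A` has no coloops, i.e. removing any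
element of `A` does not lower the rank of `A`. -/
def NestedCyclic (n k : ℕ) (C : Fin k → Finset (Fin n)) (dd : Fin k → ℕ)
    (A : Finset (Fin n)) : Prop :=
  ∀ e ∈ A, NestedRank n k C dd (A.erase e) = NestedRank n k C dd A

/-- Connectedness: no proper nonempty separator, i.e. no set `S` with
`∅ ⊊ S ⊊ [n]` such that every basis meets `S` in a constant number of
elements. -/
def NestedConnected (n k : ℕ) (C : Fin k → Finset (Fin n)) (dd : Fin k → ℕ) : Prop :=
  ¬ ∃ S : Finset (Fin n), S.Nonempty ∧ S ≠ Finset.univ ∧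
    ∃ m : ℕ, ∀ B, NestedBase n k C dd B → (B ∩ S).card = m

open Finset

namespace St5

variable {n k : ℕ} (C : Fin k → Finset (Fin n)) (dd : Fin k → ℕ)

def Dp (h : ℕ) : ℕ := ∑ ℓ ∈ Finset.univ.filter (fun ℓ : Fin k => (ℓ : ℕ) < h), dd ℓ

def Pp (h : ℕ) : Finset (Fin n) :=
  (Finset.univ.filter (fun ℓ : Fin k => (ℓ : ℕ) < h)).biUnion C

variable {C dd}

lemma filter_subset_filter_lt {h h' : ℕ} (hh : h ≤ h') :
    (Finset.univ.filter (fun ℓ : Fin k => (ℓ : ℕ) < h))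
      ⊆ (Finset.univ.filter (fun ℓ : Fin k => (ℓ : ℕ) < h')) := by
  intro ℓ hℓ
  simp only [Finset.mem_filter, Finset.mem_univ, true_and] at *
  omega

lemma Dp_mono {h h' : ℕ} (hh : h ≤ h') : Dp dd h ≤ Dp dd h' :=
  Finset.sum_le_sum_of_subset (filter_subset_filter_lt hh)

lemma Pp_mono {h h' : ℕ} (hh : h ≤ h') : Pp C h ⊆ Pp C h' :=
  Finset.biUnion_subset_biUnion_of_subset_left _ (filter_subset_filter_lt hh)

lemma filter_k_eq_univ : (Finset.univ.filter (fun ℓ : Fin k => (ℓ : ℕ) < k)) = Finset.univ := by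
  apply Finset.filter_true_of_mem; intro ℓ _; exact ℓ.isLt

lemma Dp_k : Dp dd k = ∑ ℓ, dd ℓ := by rw [Dp, filter_k_eq_univ]

lemma Pp_zero : Pp C 0 = ∅ := by simp [Pp]

lemma Pp_k (hcover : ∀ i : Fin n, ∃ ℓ, i ∈ C ℓ) : Pp C k = Finset.univ := by
  rw [Pp, filter_k_eq_univ]
  ext x; simp only [Finset.mem_biUnion, Finset.mem_univ, true_and, iff_true]
  exact hcover x

variable (hdisj : ∀ a b : Fin k, a ≠ b → Disjoint (C a) (C b))
include hdisj

lemma mem_Pp_iff {x : Fin n} {a : Fin k} (hx : x ∈ C a) {h : ℕ} :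
    x ∈ Pp C h ↔ (a : ℕ) < h := by
  constructor
  · intro hxP
    rw [Pp, Finset.mem_biUnion] at hxP
    obtain ⟨m, hm, hxm⟩ := hxP
    simp only [Finset.mem_filter, Finset.mem_univ, true_and] at hm
    rcases eq_or_ne m a with rfl | hma
    · exact hm
    · exact absurd hx (Finset.disjoint_left.mp (hdisj m a hma) hxm)
  · intro ha
    rw [Pp, Finset.mem_biUnion]
    exact ⟨a, by simp [ha], hx⟩

lemma card_inter_Pp (S : Finset (Fin n)) (h : ℕ) :
    (S ∩ Pp C h).card = ∑ ℓ ∈ Finset.univ.filter (fun ℓ : Fin k => (ℓ : ℕ) < h),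
      (S ∩ C ℓ).card := by
  have : S ∩ Pp C h
      = (Finset.univ.filter (fun ℓ : Fin k => (ℓ : ℕ) < h)).biUnion (fun ℓ => S ∩ C ℓ) := by
    ext x
    simp only [Pp, Finset.mem_inter, Finset.mem_biUnion]
    tauto
  rw [this]
  apply Finset.card_biUnion
  intro a _ b _ hab
  exact Finset.disjoint_left.mpr fun x hx hx' => Finset.disjoint_left.mp (hdisj a b hab)
    (Finset.mem_inter.mp hx).2 (Finset.mem_inter.mp hx').2

lemma card_eq_sum (hcover : ∀ i : Fin n, ∃ ℓ, i ∈ C ℓ) (S : Finset (Fin n)) :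
    S.card = ∑ ℓ, (S ∩ C ℓ).card := by
  have h := card_inter_Pp hdisj S k
  rw [Pp_k hcover, Finset.inter_univ, filter_k_eq_univ] at h
  exact h

lemma card_sdiff_Pp (hcover : ∀ i : Fin n, ∃ ℓ, i ∈ C ℓ) (S : Finset (Fin n)) (h : ℕ) :
    (S \ Pp C h).card = ∑ ℓ ∈ Finset.univ.filter (fun ℓ : Fin k => ¬ (ℓ : ℕ) < h),
      (S ∩ C ℓ).card := by
  have h1 : (S \ Pp C h).card + (S ∩ Pp C h).card = S.card :=
    Finset.card_sdiff_add_card_inter S (Pp C h)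
  have h2 := card_eq_sum hdisj hcover S
  have h3 := card_inter_Pp hdisj S h
  have h4 := Finset.sum_filter_add_sum_filter_not Finset.univ
    (fun ℓ : Fin k => (ℓ : ℕ) < h) (fun ℓ => (S ∩ C ℓ).card)
  omega




lemma base_iff (S : Finset (Fin n)) :
    NestedBase n k C dd S ↔
      S.card = Dp dd k ∧ ∀ h : ℕ, h ≤ k → (S ∩ Pp C h).card ≤ Dp dd h := by
  rw [NestedBase, Dp_k]
  constructor
  · rintro ⟨hcard, hpre⟩
    refine ⟨hcard, fun h hh => ?_⟩
    rcases lt_or_eq_of_le hh with hh | hh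
    · rw [card_inter_Pp hdisj]; exact hpre h hh
    · rw [hh]
      calc (S ∩ Pp C k).card ≤ S.card := Finset.card_le_card Finset.inter_subset_left
        _ = ∑ ℓ, dd ℓ := hcard
        _ = Dp dd k := Dp_k.symm
  · rintro ⟨hcard, hpre⟩
    refine ⟨hcard, fun h hh => ?_⟩
    rw [← card_inter_Pp hdisj]
    exact hpre h (le_of_lt hh)

/-- extension of an "independent" set to a basis -/
lemma extend (hcover : ∀ i : Fin n, ∃ ℓ, i ∈ C ℓ) (h1 : ∀ ℓ, dd ℓ ≤ (C ℓ).card) :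
    ∀ (m : ℕ) (I : Finset (Fin n)), Dp dd k - I.card = m →
    (∀ h : ℕ, h ≤ k → (I ∩ Pp C h).card ≤ Dp dd h) →
    ∃ B, I ⊆ B ∧ NestedBase n k C dd B := by
  intro m
  induction m with
  | zero =>
    intro I hm hInd
    have hle : I.card ≤ Dp dd k := by
      have := hInd k le_rfl
      rwa [Pp_k hcover, Finset.inter_univ] at this
    have hcard : I.card = Dp dd k := by omega
    exact ⟨I, Finset.Subset.refl I, (base_iff hdisj I).mpr ⟨hcard, hInd⟩⟩
  | succ m ih =>
    intro I hm hInd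
    have hlt : I.card < Dp dd k := by omega
    -- find an element to add
    have hex : ∃ ℓ : Fin k, ¬ C ℓ ⊆ I := by
      by_contra hc
      push_neg at hc
      have : Dp dd k ≤ I.card := by
        rw [Dp_k, card_eq_sum hdisj hcover I]
        apply Finset.sum_le_sum
        intro ℓ _
        rw [Finset.inter_eq_right.mpr (hc ℓ)]
        exact h1 ℓ
      omega
    classical
    set L := Finset.univ.filter (fun ℓ : Fin k => ¬ C ℓ ⊆ I) with hL
    have hLne : L.Nonempty := by
      obtain ⟨ℓ, hℓ⟩ := hex
      exact ⟨ℓ, by simp [hL, hℓ]⟩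
    set lm := L.max' hLne with hlm
    have hlmem : ¬ C lm ⊆ I := by
      have := L.max'_mem hLne
      simpa [hL] using this
    obtain ⟨x, hxC, hxI⟩ := Finset.not_subset.mp hlmem
    have hfull : ∀ j : Fin k, (lm : ℕ) < (j : ℕ) → C j ⊆ I := by
      intro j hj
      by_contra hc
      have hjL : j ∈ L := by simp [hL, hc]
      have := L.le_max' j hjL
      rw [← hlm] at this
      exact absurd (Fin.lt_def.mpr hj) (not_lt.mpr this)
    have hstep : ∃ B, insert x I ⊆ B ∧ NestedBase n k C dd B := by
      refine ih (insert x I) ?_ ?_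
      · rw [Finset.card_insert_of_notMem hxI]; omega
      intro h hh
      rcases le_or_gt h (lm : ℕ) with hcase | hcase
      · -- x not in Pp h
        have hxP : x ∉ Pp C h := by
          rw [mem_Pp_iff hdisj hxC]; omega
        have : insert x I ∩ Pp C h = I ∩ Pp C h := by
          ext y
          simp only [Finset.mem_inter, Finset.mem_insert]
          constructor
          · rintro ⟨(rfl | hy), hy2⟩
            · exact absurd hy2 hxP
            · exact ⟨hy, hy2⟩
          · tauto
        rw [this]; exact hInd h hh
      · -- h > lm: prefix has slack
        have hslack : (I ∩ Pp C h).card + 1 ≤ Dp dd h := by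
          -- all components ≥ h are full in I
          have hA : (I \ Pp C h).card = ∑ ℓ ∈ Finset.univ.filter (fun ℓ : Fin k => ¬ (ℓ : ℕ) < h), (I ∩ C ℓ).card :=
            card_sdiff_Pp hdisj hcover I h
          have hfullsum : ∑ ℓ ∈ Finset.univ.filter (fun ℓ : Fin k => ¬ (ℓ : ℕ) < h), (I ∩ C ℓ).card
              = ∑ ℓ ∈ Finset.univ.filter (fun ℓ : Fin k => ¬ (ℓ : ℕ) < h), (C ℓ).card := by
            apply Finset.sum_congr rfl
            intro ℓ hℓ
            simp only [Finset.mem_filter, Finset.mem_univ, true_and, not_lt] at hℓ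
            have : C ℓ ⊆ I := hfull ℓ (by omega)
            rw [Finset.inter_eq_right.mpr this]
          have hdom : ∑ ℓ ∈ Finset.univ.filter (fun ℓ : Fin k => ¬ (ℓ : ℕ) < h), dd ℓ
              ≤ ∑ ℓ ∈ Finset.univ.filter (fun ℓ : Fin k => ¬ (ℓ : ℕ) < h), (C ℓ).card :=
            Finset.sum_le_sum (fun ℓ _ => h1 ℓ)
          have hsplitD : Dp dd h + ∑ ℓ ∈ Finset.univ.filter (fun ℓ : Fin k => ¬ (ℓ : ℕ) < h), dd ℓ = Dp dd k := by
            rw [Dp, Dp_k]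
            exact Finset.sum_filter_add_sum_filter_not Finset.univ _ _
          have hIsplit : (I ∩ Pp C h).card + (I \ Pp C h).card = I.card := by
            have := Finset.card_sdiff_add_card_inter I (Pp C h)
            omega
          omega
        have : (insert x I ∩ Pp C h).card ≤ (I ∩ Pp C h).card + 1 := by
          have : insert x I ∩ Pp C h ⊆ insert x (I ∩ Pp C h) := by
            intro y hy
            simp only [Finset.mem_inter, Finset.mem_insert] at *
            tauto
          calc (insert x I ∩ Pp C h).card ≤ (insert x (I ∩ Pp C h)).card := Finset.card_le_card this
            _ ≤ (I ∩ Pp C h).card + 1 := Finset.card_insert_le _ _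
        omega
    obtain ⟨B, hB1, hB2⟩ := hstep
    exact ⟨B, (Finset.subset_insert x I).trans hB1, hB2⟩

lemma exists_base (hcover : ∀ i : Fin n, ∃ ℓ, i ∈ C ℓ) (h1 : ∀ ℓ, dd ℓ ≤ (C ℓ).card) :
    ∃ B, NestedBase n k C dd B := by
  obtain ⟨B, _, hB⟩ := extend hdisj hcover h1 (Dp dd k - (∅ : Finset (Fin n)).card) ∅ rfl
    (by intro h hh; simp)
  exact ⟨B, hB⟩


omit hdisj in
lemma Pp_succ {ℓ : ℕ} (hℓ : ℓ < k) : Pp C (ℓ+1) = Pp C ℓ ∪ C ⟨ℓ, hℓ⟩ := by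
  have : (Finset.univ.filter (fun m : Fin k => (m : ℕ) < ℓ+1))
      = insert (⟨ℓ, hℓ⟩ : Fin k) (Finset.univ.filter (fun m : Fin k => (m : ℕ) < ℓ)) := by
    ext m
    simp only [Finset.mem_filter, Finset.mem_univ, true_and, Finset.mem_insert, Fin.ext_iff]
    omega
  rw [Pp, this, Finset.biUnion_insert, Pp, Finset.union_comm]

lemma disj_C_Pp {ℓ : Fin k} {j : ℕ} (hj : j ≤ (ℓ : ℕ)) : Disjoint (C ℓ) (Pp C j) := by
  rw [Finset.disjoint_left]
  intro x hx hx'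
  rw [mem_Pp_iff hdisj hx] at hx'
  omega

omit hdisj in
lemma bddAbove_rankSet (A : Finset (Fin n)) :
    BddAbove {m | ∃ B, NestedBase n k C dd B ∧ (B ∩ A).card = m} := by
  refine ⟨n, fun m hm => ?_⟩
  obtain ⟨B, _, rfl⟩ := hm
  calc (B ∩ A).card ≤ (Finset.univ : Finset (Fin n)).card :=
        Finset.card_le_card (Finset.subset_univ _)
    _ = n := by simp

lemma rank_achieved (hcover : ∀ i : Fin n, ∃ ℓ, i ∈ C ℓ) (h1 : ∀ ℓ, dd ℓ ≤ (C ℓ).card)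
    (A : Finset (Fin n)) :
    ∃ B, NestedBase n k C dd B ∧ (B ∩ A).card = NestedRank n k C dd A := by
  have hne : {m | ∃ B, NestedBase n k C dd B ∧ (B ∩ A).card = m}.Nonempty := by
    obtain ⟨B, hB⟩ := exists_base hdisj hcover h1
    exact ⟨(B ∩ A).card, B, hB, rfl⟩
  exact Nat.sSup_mem hne (bddAbove_rankSet A)

omit hdisj in
lemma le_rank {A B : Finset (Fin n)} (hB : NestedBase n k C dd B) :
    (B ∩ A).card ≤ NestedRank n k C dd A :=
  le_csSup (bddAbove_rankSet A) ⟨B, hB, rfl⟩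

lemma rank_mono (hcover : ∀ i : Fin n, ∃ ℓ, i ∈ C ℓ) (h1 : ∀ ℓ, dd ℓ ≤ (C ℓ).card)
    {A A' : Finset (Fin n)} (h : A ⊆ A') :
    NestedRank n k C dd A ≤ NestedRank n k C dd A' := by
  obtain ⟨B, hB, hcard⟩ := rank_achieved hdisj hcover h1 A
  rw [← hcard]
  calc (B ∩ A).card ≤ (B ∩ A').card :=
        Finset.card_le_card (Finset.inter_subset_inter (Finset.Subset.refl B) h)
    _ ≤ NestedRank n k C dd A' := le_rank hB

lemma rank_ub (hcover : ∀ i : Fin n, ∃ ℓ, i ∈ C ℓ) (h1 : ∀ ℓ, dd ℓ ≤ (C ℓ).card)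
    (A : Finset (Fin n)) {h : ℕ} (hh : h ≤ k) :
    NestedRank n k C dd A ≤ Dp dd h + (A \ Pp C h).card := by
  obtain ⟨B, hB, hcard⟩ := rank_achieved hdisj hcover h1 A
  rw [← hcard]
  have h1' : ((B ∩ A) ∩ Pp C h).card + ((B ∩ A) \ Pp C h).card = (B ∩ A).card := by
    have := Finset.card_sdiff_add_card_inter (B ∩ A) (Pp C h)
    omega
  have h2 : ((B ∩ A) ∩ Pp C h).card ≤ (B ∩ Pp C h).card := by
    apply Finset.card_le_card
    intro x hx
    rw [Finset.mem_inter] at *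
    exact ⟨(Finset.mem_inter.mp hx.1).1, hx.2⟩
  have h3 : (B ∩ Pp C h).card ≤ Dp dd h := ((base_iff hdisj B).mp hB).2 h hh
  have h4 : ((B ∩ A) \ Pp C h).card ≤ (A \ Pp C h).card := by
    apply Finset.card_le_card
    intro x hx
    rw [Finset.mem_sdiff] at *
    exact ⟨(Finset.mem_inter.mp hx.1).2, hx.2⟩
  omega

lemma greedy (A : Finset (Fin n)) :
    ∀ ℓ : ℕ, ℓ ≤ k → ∃ (I : Finset (Fin n)) (h' : ℕ), h' ≤ ℓ ∧
      I ⊆ A ∧ I ⊆ Pp C ℓ ∧ I.card ≤ Dp dd ℓ ∧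
      (∀ j, j ≤ ℓ → (I ∩ Pp C j).card ≤ Dp dd j) ∧
      I.card + (A ∩ Pp C h').card = Dp dd h' + (A ∩ Pp C ℓ).card := by
  intro ℓ
  induction ℓ with
  | zero =>
    intro _
    exact ⟨∅, 0, le_refl _, Finset.empty_subset _, Finset.empty_subset _, Nat.zero_le _,
      fun j _ => by simp, by simp [Dp]⟩
  | succ ℓ ih =>
    intro hℓ1
    have hℓ : ℓ < k := hℓ1
    obtain ⟨I, h', hh', hIA, hIP, hIcard, hInd, hval⟩ := ih (le_of_lt hℓ)
    set ℓ' : Fin k := ⟨ℓ, hℓ⟩ with hℓ'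
    set a := (A ∩ C ℓ').card with ha
    have hDD : Dp dd ℓ ≤ Dp dd (ℓ+1) := Dp_mono (Nat.le_succ ℓ)
    set c := min a (Dp dd (ℓ+1) - I.card) with hc
    obtain ⟨T, hTsub, hTcard⟩ := Finset.exists_subset_card_eq
      (show c ≤ (A ∩ C ℓ').card from min_le_left _ _)
    have hTC : T ⊆ C ℓ' := hTsub.trans Finset.inter_subset_right
    have hdisjIT : Disjoint I T := by
      apply Finset.disjoint_left.mpr
      intro x hxI hxT
      exact Finset.disjoint_left.mp (disj_C_Pp hdisj (le_refl (ℓ' : ℕ))) (hTC hxT) (hIP hxI)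
    have hPsucc := Pp_succ (C := C) hℓ
    have hcardI' : (I ∪ T).card = I.card + c := by
      rw [Finset.card_union_of_disjoint hdisjIT, hTcard]
    have hI'A : I ∪ T ⊆ A :=
      Finset.union_subset hIA (hTsub.trans Finset.inter_subset_left)
    have hI'P : I ∪ T ⊆ Pp C (ℓ+1) := by
      rw [hPsucc]
      exact Finset.union_subset (hIP.trans Finset.subset_union_left)
        (hTC.trans Finset.subset_union_right)
    have hI'card : (I ∪ T).card ≤ Dp dd (ℓ+1) := by
      rw [hcardI']; omega
    have hI'Ind : ∀ j, j ≤ ℓ + 1 → ((I ∪ T) ∩ Pp C j).card ≤ Dp dd j := by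
      intro j hj
      rcases Nat.lt_or_ge j (ℓ+1) with hj' | hj'
      · have hTP : (I ∪ T) ∩ Pp C j = I ∩ Pp C j := by
          ext x
          simp only [Finset.mem_inter, Finset.mem_union]
          constructor
          · rintro ⟨hx1 | hx1, hx2⟩
            · exact ⟨hx1, hx2⟩
            · exact absurd hx2 (Finset.disjoint_left.mp (disj_C_Pp hdisj (by simp only [hℓ', Fin.val_mk]; omega)) (hTC hx1))
          · tauto
        rw [hTP]
        exact hInd j (by omega)
      · have hj'' : j = ℓ + 1 := by omega
        subst hj''
        calc ((I ∪ T) ∩ Pp C (ℓ+1)).card ≤ (I ∪ T).card :=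
              Finset.card_le_card Finset.inter_subset_left
          _ ≤ Dp dd (ℓ+1) := hI'card
    -- card of A ∩ Pp (ℓ+1)
    have hAsplit : (A ∩ Pp C (ℓ+1)).card = (A ∩ Pp C ℓ).card + a := by
      rw [hPsucc, Finset.inter_union_distrib_left]
      rw [Finset.card_union_of_disjoint]
      exact Finset.disjoint_right.mpr fun x hx hx' =>
        Finset.disjoint_left.mp (disj_C_Pp hdisj (le_refl (ℓ' : ℕ)))
          (Finset.mem_inter.mp hx).2 (Finset.mem_inter.mp (by exact hx')).2 |>.elim
    rcases Nat.le_total a (Dp dd (ℓ+1) - I.card) with hcase | hcase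
    · -- ungated: keep h'
      have hceq : c = a := by omega
      have hfin : (I ∪ T).card + (A ∩ Pp C h').card = Dp dd h' + (A ∩ Pp C (ℓ+1)).card := by
        rw [hcardI', hceq, hAsplit]
        omega
      exact ⟨I ∪ T, h', by omega, hI'A, hI'P, hI'card, hI'Ind, hfin⟩
    · -- gated: h' = ℓ+1
      have hceq : c = Dp dd (ℓ+1) - I.card := by omega
      have hfin : (I ∪ T).card + (A ∩ Pp C (ℓ+1)).card = Dp dd (ℓ+1) + (A ∩ Pp C (ℓ+1)).card := by
        rw [hcardI', hceq]
        omega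
      exact ⟨I ∪ T, ℓ+1, le_refl _, hI'A, hI'P, hI'card, hI'Ind, hfin⟩

lemma rank_lb (hcover : ∀ i : Fin n, ∃ ℓ, i ∈ C ℓ) (h1 : ∀ ℓ, dd ℓ ≤ (C ℓ).card)
    (A : Finset (Fin n)) :
    ∃ h : ℕ, h ≤ k ∧ Dp dd h + (A \ Pp C h).card ≤ NestedRank n k C dd A := by
  obtain ⟨I, h', hh', hIA, hIP, hIcard, hInd, hval⟩ := greedy hdisj A k le_rfl
  obtain ⟨B, hIB, hB⟩ := extend hdisj hcover h1 (Dp dd k - I.card) I rfl hInd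
  refine ⟨h', hh', ?_⟩
  have h2 : (A \ Pp C h').card + (A ∩ Pp C h').card = A.card :=
    Finset.card_sdiff_add_card_inter A (Pp C h')
  have h3 : (A ∩ Pp C k) = A := by rw [Pp_k hcover, Finset.inter_univ]
  rw [h3] at hval
  have h4 : I.card ≤ (B ∩ A).card := by
    apply Finset.card_le_card
    intro x hx
    exact Finset.mem_inter.mpr ⟨hIB hx, hIA hx⟩
  have h5 := le_rank (A := A) hB
  omega


lemma buildT (T : Fin k → Finset (Fin n)) (hT : ∀ ℓ, T ℓ ⊆ C ℓ) :
    (∀ ℓ, (Finset.univ.biUnion T) ∩ C ℓ = T ℓ) ∧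
    (∀ j : ℕ, ((Finset.univ.biUnion T) ∩ Pp C j).card
        = ∑ ℓ ∈ Finset.univ.filter (fun ℓ : Fin k => (ℓ : ℕ) < j), (T ℓ).card) ∧
    ((Finset.univ.biUnion T).card = ∑ ℓ, (T ℓ).card) := by
  have hint : ∀ ℓ, (Finset.univ.biUnion T) ∩ C ℓ = T ℓ := by
    intro ℓ
    ext x
    simp only [Finset.mem_inter, Finset.mem_biUnion, Finset.mem_univ, true_and]
    constructor
    · rintro ⟨⟨m, hm⟩, hx⟩
      rcases eq_or_ne m ℓ with rfl | hmℓ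
      · exact hm
      · exact absurd hx (Finset.disjoint_left.mp (hdisj m ℓ hmℓ) (hT m hm))
    · intro hx
      exact ⟨⟨ℓ, hx⟩, hT ℓ hx⟩
  refine ⟨hint, fun j => ?_, ?_⟩
  · rw [card_inter_Pp hdisj]
    exact Finset.sum_congr rfl fun ℓ _ => by rw [hint ℓ]
  · rw [Finset.card_biUnion]
    intro a _ b _ hab
    exact Finset.disjoint_of_subset_left (hT a) (Finset.disjoint_of_subset_right (hT b) (hdisj a b hab))

lemma exists_I_prefix (h1 : ∀ ℓ, dd ℓ ≤ (C ℓ).card) {h : ℕ} (hh : h ≤ k) :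
    ∃ I : Finset (Fin n),
      (∀ j : ℕ, j ≤ k → (I ∩ Pp C j).card ≤ Dp dd j) ∧
      (I ∩ Pp C h).card = Dp dd h := by
  classical
  have hex : ∀ ℓ : Fin k, ∃ T, T ⊆ C ℓ ∧ T.card = (if (ℓ : ℕ) < h then dd ℓ else 0) := by
    intro ℓ
    apply Finset.exists_subset_card_eq
    split
    · exact h1 ℓ
    · exact Nat.zero_le _
  choose T hT1 hT2 using hex
  obtain ⟨hint, hcard, _⟩ := buildT hdisj T hT1
  refine ⟨Finset.univ.biUnion T, fun j _ => ?_, ?_⟩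
  · rw [hcard j]
    apply Finset.sum_le_sum
    intro ℓ _
    rw [hT2 ℓ]
    split
    · exact le_refl _
    · exact Nat.zero_le _
  · rw [hcard h, Dp]
    apply Finset.sum_congr rfl
    intro ℓ hℓ
    simp only [Finset.mem_filter, Finset.mem_univ, true_and] at hℓ
    rw [hT2 ℓ, if_pos hℓ]

lemma rank_Pp (hcover : ∀ i : Fin n, ∃ ℓ, i ∈ C ℓ) (h1 : ∀ ℓ, dd ℓ ≤ (C ℓ).card)
    {h : ℕ} (hh : h ≤ k) :
    NestedRank n k C dd (Pp C h) = Dp dd h := by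
  apply le_antisymm
  · have := rank_ub hdisj hcover h1 (Pp C h) hh
    rwa [Finset.sdiff_self, Finset.card_empty, Nat.add_zero] at this
  · obtain ⟨I, hInd, hIcard⟩ := exists_I_prefix hdisj h1 hh
    obtain ⟨B, hIB, hB⟩ := extend hdisj hcover h1 (Dp dd k - I.card) I rfl hInd
    calc Dp dd h = (I ∩ Pp C h).card := hIcard.symm
      _ ≤ (B ∩ Pp C h).card :=
          Finset.card_le_card (Finset.inter_subset_inter hIB (Finset.Subset.refl _))
      _ ≤ NestedRank n k C dd (Pp C h) := le_rank hB

lemma exists_tight (hcover : ∀ i : Fin n, ∃ ℓ, i ∈ C ℓ) (h1 : ∀ ℓ, dd ℓ ≤ (C ℓ).card)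
    (A : Finset (Fin n)) :
    ∃ h : ℕ, h ≤ k ∧ NestedRank n k C dd A = Dp dd h + (A \ Pp C h).card := by
  obtain ⟨h, hh, hle⟩ := rank_lb hdisj hcover h1 A
  exact ⟨h, hh, le_antisymm (rank_ub hdisj hcover h1 A hh) hle⟩

lemma flat_iff (hcover : ∀ i : Fin n, ∃ ℓ, i ∈ C ℓ) (h1 : ∀ ℓ, dd ℓ ≤ (C ℓ).card)
    (A : Finset (Fin n)) :
    NestedFlat n k C dd A ↔ ∀ h : ℕ, h ≤ k →
      NestedRank n k C dd A = Dp dd h + (A \ Pp C h).card → Pp C h ⊆ A := by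
  constructor
  · intro hflat h hh htight
    intro e heP
    by_contra heA
    have hlt := hflat e heA
    have hub := rank_ub hdisj hcover h1 (insert e A) hh
    rw [Finset.insert_sdiff_of_mem A heP] at hub
    omega
  · intro htight e heA
    have hmono := rank_mono hdisj hcover h1 (Finset.subset_insert e A)
    rcases lt_or_eq_of_le hmono with hlt | heq
    · exact hlt
    · exfalso
      obtain ⟨h', hh', ht'⟩ := exists_tight hdisj hcover h1 (insert e A)
      have hubA := rank_ub hdisj hcover h1 A hh'
      by_cases heP : e ∈ Pp C h'
      · have hsd : insert e A \ Pp C h' = A \ Pp C h' := Finset.insert_sdiff_of_mem A heP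
        rw [hsd] at ht'
        have : NestedRank n k C dd A = Dp dd h' + (A \ Pp C h').card := by omega
        exact heA (htight h' hh' this heP)
      · have hsd : insert e A \ Pp C h' = insert e (A \ Pp C h') := by
          ext x
          simp only [Finset.mem_sdiff, Finset.mem_insert]
          constructor
          · rintro ⟨rfl | hx, hx2⟩
            · exact Or.inl rfl
            · exact Or.inr ⟨hx, hx2⟩
          · rintro (rfl | ⟨hx1, hx2⟩)
            · exact ⟨Or.inl rfl, heP⟩
            · exact ⟨Or.inr hx1, hx2⟩
        rw [hsd, Finset.card_insert_of_notMem (fun hc => heA (Finset.mem_sdiff.mp hc).1)] at ht'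
        omega

lemma cyclic_iff (hcover : ∀ i : Fin n, ∃ ℓ, i ∈ C ℓ) (h1 : ∀ ℓ, dd ℓ ≤ (C ℓ).card)
    (A : Finset (Fin n)) :
    NestedCyclic n k C dd A ↔ ∀ h : ℕ, h ≤ k →
      NestedRank n k C dd A = Dp dd h + (A \ Pp C h).card → A ⊆ Pp C h := by
  have herase : ∀ (e : Fin n), e ∈ A → ∀ h' : ℕ, e ∈ Pp C h' →
      A.erase e \ Pp C h' = A \ Pp C h' := by
    intro e heA h' heP
    ext x
    simp only [Finset.mem_sdiff, Finset.mem_erase]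
    constructor
    · rintro ⟨⟨_, hx⟩, hx2⟩; exact ⟨hx, hx2⟩
    · rintro ⟨hx1, hx2⟩
      refine ⟨⟨?_, hx1⟩, hx2⟩
      rintro rfl
      exact hx2 heP
  have herase' : ∀ (e : Fin n), e ∈ A → ∀ h' : ℕ, e ∉ Pp C h' →
      (A.erase e \ Pp C h').card + 1 = (A \ Pp C h').card := by
    intro e heA h' heP
    have h1' : A.erase e \ Pp C h' = (A \ Pp C h').erase e := by
      ext x
      simp only [Finset.mem_sdiff, Finset.mem_erase]
      tauto
    rw [h1', Finset.card_erase_of_mem (Finset.mem_sdiff.mpr ⟨heA, heP⟩)]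
    have : 0 < (A \ Pp C h').card :=
      Finset.card_pos.mpr ⟨e, Finset.mem_sdiff.mpr ⟨heA, heP⟩⟩
    omega
  constructor
  · intro hcyc h hh htight
    intro e heA
    by_contra heP
    have heq := hcyc e heA
    have hub := rank_ub hdisj hcover h1 (A.erase e) hh
    have := herase' e heA h heP
    omega
  · intro htight e heA
    have hmono := rank_mono hdisj hcover h1 (Finset.erase_subset e A)
    rcases lt_or_eq_of_le hmono with hlt | heq
    · exfalso
      obtain ⟨h', hh', ht'⟩ := exists_tight hdisj hcover h1 (A.erase e)
      have hubA := rank_ub hdisj hcover h1 A hh'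
      by_cases heP : e ∈ Pp C h'
      · rw [herase e heA h' heP] at ht'
        omega
      · have := herase' e heA h' heP
        have htA : NestedRank n k C dd A = Dp dd h' + (A \ Pp C h').card := by omega
        exact heP (htight h' hh' htA heA)
    · exact heq


lemma C_subset_Pp {ℓ : Fin k} {h : ℕ} (hℓ : (ℓ : ℕ) < h) : C ℓ ⊆ Pp C h := by
  intro x hx
  exact (mem_Pp_iff hdisj hx).mpr hℓ

omit hdisj in
lemma Dp_split {h h' : ℕ} (hh : h ≤ h') :
    Dp dd h' = Dp dd h
      + ∑ ℓ ∈ Finset.univ.filter (fun ℓ : Fin k => (ℓ : ℕ) < h' ∧ ¬ (ℓ : ℕ) < h), dd ℓ := by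
  rw [Dp, Dp,
    ← Finset.sum_filter_add_sum_filter_not
      (Finset.univ.filter (fun ℓ : Fin k => (ℓ : ℕ) < h')) (fun ℓ : Fin k => (ℓ : ℕ) < h)]
  congr 1
  · apply Finset.sum_congr _ (fun _ _ => rfl)
    rw [Finset.filter_filter]
    ext ℓ
    simp only [Finset.mem_filter, Finset.mem_univ, true_and]
    omega
  · apply Finset.sum_congr _ (fun _ _ => rfl)
    rw [Finset.filter_filter]

lemma tight_Pp (hcover : ∀ i : Fin n, ∃ ℓ, i ∈ C ℓ) (h0 : ∀ ℓ, 0 < dd ℓ)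
    (h1 : ∀ ℓ, dd ℓ < (C ℓ).card)
    {h h' : ℕ} (hh : h ≤ k) (hh' : h' ≤ k)
    (ht : Dp dd h = Dp dd h' + (Pp C h \ Pp C h').card) :
    Pp C h' = Pp C h := by
  rcases le_or_gt h h' with hcase | hcase
  · -- Pp h ⊆ Pp h', so the sdiff is empty and Dp h = Dp h'
    have hsd : Pp C h \ Pp C h' = ∅ := Finset.sdiff_eq_empty_iff_subset.mpr (Pp_mono hcase)
    rw [hsd, Finset.card_empty, Nat.add_zero] at ht
    have hsplit := Dp_split (dd := dd) hcase
    have hzero : ∑ ℓ ∈ Finset.univ.filter (fun ℓ : Fin k => (ℓ : ℕ) < h' ∧ ¬ (ℓ : ℕ) < h), dd ℓ = 0 := by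
      omega
    have hempty : Finset.univ.filter (fun ℓ : Fin k => (ℓ : ℕ) < h' ∧ ¬ (ℓ : ℕ) < h) = ∅ := by
      rw [Finset.eq_empty_iff_forall_notMem]
      intro ℓ hℓ
      have := Finset.sum_eq_zero_iff.mp hzero ℓ hℓ
      have := h0 ℓ
      omega
    have hfil : (Finset.univ.filter (fun ℓ : Fin k => (ℓ : ℕ) < h'))
        = (Finset.univ.filter (fun ℓ : Fin k => (ℓ : ℕ) < h)) := by
      ext ℓ
      simp only [Finset.mem_filter, Finset.mem_univ, true_and]
      constructor
      · intro hℓ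
        by_contra hc
        have : ℓ ∈ Finset.univ.filter (fun ℓ : Fin k => (ℓ : ℕ) < h' ∧ ¬ (ℓ : ℕ) < h) := by
          simp only [Finset.mem_filter, Finset.mem_univ, true_and]
          exact ⟨hℓ, hc⟩
        rw [hempty] at this
        exact absurd this (Finset.notMem_empty ℓ)
      · intro hℓ; omega
    rw [Pp, Pp, hfil]
  · -- h' < h : contradiction
    exfalso
    have hcard := card_sdiff_Pp hdisj hcover (Pp C h) h'
    have hterm : ∀ ℓ ∈ Finset.univ.filter (fun ℓ : Fin k => ¬ (ℓ : ℕ) < h'),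
        (Pp C h ∩ C ℓ).card = if (ℓ : ℕ) < h then (C ℓ).card else 0 := by
      intro ℓ _
      by_cases hℓh : (ℓ : ℕ) < h
      · rw [if_pos hℓh, Finset.inter_eq_right.mpr (C_subset_Pp hdisj hℓh)]
      · rw [if_neg hℓh, Finset.card_eq_zero]
        rw [← Finset.disjoint_iff_inter_eq_empty]
        exact (disj_C_Pp (j := h) hdisj (by omega)).symm
    have hsum : (Pp C h \ Pp C h').card
        = ∑ ℓ ∈ Finset.univ.filter (fun ℓ : Fin k => (ℓ : ℕ) < h ∧ ¬ (ℓ : ℕ) < h'), (C ℓ).card := by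
      rw [hcard, Finset.sum_congr rfl hterm, ← Finset.sum_filter, Finset.filter_filter]
      apply Finset.sum_congr _ (fun _ _ => rfl)
      ext ℓ
      simp only [Finset.mem_filter, Finset.mem_univ, true_and]
      tauto
    have hsplit := Dp_split (dd := dd) (le_of_lt hcase)
    have hlt : ∑ ℓ ∈ Finset.univ.filter (fun ℓ : Fin k => (ℓ : ℕ) < h ∧ ¬ (ℓ : ℕ) < h'), dd ℓ
        < ∑ ℓ ∈ Finset.univ.filter (fun ℓ : Fin k => (ℓ : ℕ) < h ∧ ¬ (ℓ : ℕ) < h'), (C ℓ).card := by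
      apply Finset.sum_lt_sum_of_nonempty
      · refine ⟨⟨h', by omega⟩, ?_⟩
        simp only [Finset.mem_filter, Finset.mem_univ, true_and, Fin.val_mk]
        omega
      · exact fun ℓ _ => h1 ℓ
    omega

lemma cyclic_flat_iff (hcover : ∀ i : Fin n, ∃ ℓ, i ∈ C ℓ) (h0 : ∀ ℓ, 0 < dd ℓ)
    (h1 : ∀ ℓ, dd ℓ < (C ℓ).card) (A : Finset (Fin n)) :
    (NestedFlat n k C dd A ∧ NestedCyclic n k C dd A) ↔
      ∃ h : ℕ, h ≤ k ∧ A = Pp C h := by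
  have h1' : ∀ ℓ, dd ℓ ≤ (C ℓ).card := fun ℓ => le_of_lt (h1 ℓ)
  constructor
  · rintro ⟨hflat, hcyc⟩
    obtain ⟨h, hh, ht⟩ := exists_tight hdisj hcover h1' A
    refine ⟨h, hh, Finset.Subset.antisymm ?_ ?_⟩
    · exact (cyclic_iff hdisj hcover h1' A).mp hcyc h hh ht
    · exact (flat_iff hdisj hcover h1' A).mp hflat h hh ht
  · rintro ⟨h, hh, rfl⟩
    have hrk := rank_Pp hdisj hcover h1' hh
    constructor
    · rw [flat_iff hdisj hcover h1']
      intro h' hh' ht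
      rw [hrk] at ht
      rw [tight_Pp hdisj hcover h0 h1 hh hh' ht]
    · rw [cyclic_iff hdisj hcover h1']
      intro h' hh' ht
      rw [hrk] at ht
      rw [tight_Pp hdisj hcover h0 h1 hh hh' ht]

omit hdisj in
lemma inter_swap {B X : Finset (Fin n)} {e f : Fin n} (heB : e ∈ B) (hfB : f ∉ B) :
    ((insert f (B.erase e)) ∩ X).card + (if e ∈ X then 1 else 0)
      = (B ∩ X).card + (if f ∈ X then 1 else 0) := by
  classical
  by_cases hfX : f ∈ X
  · have h2 : (insert f (B.erase e)) ∩ X = insert f ((B ∩ X).erase e) := by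
      ext x
      simp only [Finset.mem_inter, Finset.mem_insert, Finset.mem_erase]
      constructor
      · rintro ⟨rfl | ⟨hne, hxB⟩, hxX⟩
        · exact Or.inl rfl
        · exact Or.inr ⟨hne, hxB, hxX⟩
      · rintro (rfl | ⟨hne, hxB, hxX⟩)
        · exact ⟨Or.inl rfl, hfX⟩
        · exact ⟨Or.inr ⟨hne, hxB⟩, hxX⟩
    have h3 : f ∉ (B ∩ X).erase e :=
      fun hc => hfB (Finset.mem_inter.mp (Finset.mem_erase.mp hc).2).1
    rw [h2, Finset.card_insert_of_notMem h3, if_pos hfX]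
    by_cases heX : e ∈ X
    · rw [if_pos heX, Finset.card_erase_of_mem (Finset.mem_inter.mpr ⟨heB, heX⟩)]
      have : 0 < (B ∩ X).card := Finset.card_pos.mpr ⟨e, Finset.mem_inter.mpr ⟨heB, heX⟩⟩
      omega
    · rw [if_neg heX, Finset.erase_eq_of_notMem (fun hc => heX (Finset.mem_inter.mp hc).2)]
  · have h2 : (insert f (B.erase e)) ∩ X = (B ∩ X).erase e := by
      ext x
      simp only [Finset.mem_inter, Finset.mem_insert, Finset.mem_erase]
      constructor
      · rintro ⟨rfl | ⟨hne, hxB⟩, hxX⟩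
        · exact absurd hxX hfX
        · exact ⟨hne, hxB, hxX⟩
      · rintro ⟨hne, hxB, hxX⟩
        exact ⟨Or.inr ⟨hne, hxB⟩, hxX⟩
    rw [h2, if_neg hfX]
    by_cases heX : e ∈ X
    · rw [if_pos heX, Finset.card_erase_of_mem (Finset.mem_inter.mpr ⟨heB, heX⟩)]
      have : 0 < (B ∩ X).card := Finset.card_pos.mpr ⟨e, Finset.mem_inter.mpr ⟨heB, heX⟩⟩
      omega
    · rw [if_neg heX, Finset.erase_eq_of_notMem (fun hc => heX (Finset.mem_inter.mp hc).2)]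

lemma exists_base_dd (h0 : ∀ ℓ, 0 < dd ℓ) (h1 : ∀ ℓ, dd ℓ < (C ℓ).card)
    {e f : Fin n} {a : Fin k} (he : e ∈ C a) (hef : e ≠ f) :
    ∃ B, NestedBase n k C dd B ∧ e ∈ B ∧ f ∉ B ∧
      (∀ j : ℕ, (B ∩ Pp C j).card = Dp dd j) := by
  classical
  have hex : ∀ ℓ : Fin k, ∃ T, T ⊆ C ℓ \ {e, f}
      ∧ T.card = dd ℓ - (if ℓ = a then 1 else 0) := by
    intro ℓ
    apply Finset.exists_subset_card_eq
    by_cases hla : ℓ = a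
    · subst hla
      have hc2 : (C ℓ).card ≤ (C ℓ \ ({e, f} : Finset (Fin n))).card + 2 := by
        have hle := Finset.card_le_card_sdiff_add_card (s := C ℓ) (t := ({e, f} : Finset (Fin n)))
        have hc : ({e, f} : Finset (Fin n)).card ≤ 2 := Finset.card_le_two
        omega
      have := h1 ℓ
      rw [if_pos rfl]
      omega
    · have heC : e ∉ C ℓ := Finset.disjoint_left.mp (hdisj a ℓ (fun hc => hla hc.symm)) he
      have hsub : C ℓ \ ({f} : Finset (Fin n)) ⊆ C ℓ \ ({e, f} : Finset (Fin n)) := by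
        intro x hx
        rw [Finset.mem_sdiff] at *
        simp only [Finset.mem_insert, Finset.mem_singleton] at *
        refine ⟨hx.1, ?_⟩
        rintro (rfl | rfl)
        · exact heC hx.1
        · exact hx.2 rfl
      have hle := Finset.card_le_card hsub
      have hc2 : (C ℓ).card ≤ (C ℓ \ ({f} : Finset (Fin n))).card + 1 := by
        have := Finset.card_le_card_sdiff_add_card (s := C ℓ) (t := ({f} : Finset (Fin n)))
        simp only [Finset.card_singleton] at this
        omega
      have := h1 ℓ
      rw [if_neg hla]
      omega
  choose T' hT'1 hT'2 using hex
  have heT' : ∀ ℓ, e ∉ T' ℓ := by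
    intro ℓ hc
    have := hT'1 ℓ hc
    rw [Finset.mem_sdiff] at this
    exact this.2 (by simp)
  have hfT' : ∀ ℓ, f ∉ T' ℓ := by
    intro ℓ hc
    have := hT'1 ℓ hc
    rw [Finset.mem_sdiff] at this
    exact this.2 (by simp)
  set T : Fin k → Finset (Fin n) := fun ℓ => if ℓ = a then insert e (T' ℓ) else T' ℓ with hTdef
  have hTC : ∀ ℓ, T ℓ ⊆ C ℓ := by
    intro ℓ
    rw [hTdef]
    dsimp only
    split
    · rename_i hla
      subst hla
      intro x hx
      rcases Finset.mem_insert.mp hx with rfl | hx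
      · exact he
      · exact (Finset.mem_sdiff.mp (hT'1 ℓ hx)).1
    · exact fun x hx => (Finset.mem_sdiff.mp (hT'1 _ hx)).1
  have hTcard : ∀ ℓ, (T ℓ).card = dd ℓ := by
    intro ℓ
    rw [hTdef]
    dsimp only
    split
    · rename_i hla
      subst hla
      rw [Finset.card_insert_of_notMem (heT' ℓ), hT'2 ℓ, if_pos rfl]
      have := h0 ℓ
      omega
    · rename_i hla
      rw [hT'2 ℓ, if_neg hla]
      omega
  have hfT : ∀ ℓ, f ∉ T ℓ := by
    intro ℓ
    rw [hTdef]
    dsimp only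
    split
    · intro hc
      rcases Finset.mem_insert.mp hc with hfe | hc'
      · exact hef hfe.symm
      · exact hfT' ℓ hc'
    · exact hfT' ℓ
  obtain ⟨hint, hcard, htot⟩ := buildT hdisj T hTC
  have hpre : ∀ j : ℕ, ((Finset.univ.biUnion T) ∩ Pp C j).card = Dp dd j := by
    intro j
    rw [hcard j, Dp]
    exact Finset.sum_congr rfl fun ℓ _ => hTcard ℓ
  refine ⟨Finset.univ.biUnion T, ?_, ?_, ?_, hpre⟩
  · rw [base_iff hdisj]
    constructor
    · rw [htot, Dp_k]
      exact Finset.sum_congr rfl fun ℓ _ => hTcard ℓ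
    · exact fun j _ => le_of_eq (hpre j)
  · refine Finset.mem_biUnion.mpr ⟨a, Finset.mem_univ a, ?_⟩
    rw [hTdef]
    dsimp only
    rw [if_pos rfl]
    exact Finset.mem_insert_self e _
  · intro hc
    obtain ⟨ℓ, _, hℓ⟩ := Finset.mem_biUnion.mp hc
    exact hfT ℓ hℓ

lemma connected (hcover : ∀ i : Fin n, ∃ ℓ, i ∈ C ℓ) (h0 : ∀ ℓ, 0 < dd ℓ)
    (h1 : ∀ ℓ, dd ℓ < (C ℓ).card) : NestedConnected n k C dd := by
  rintro ⟨S, hSne, hSuniv, m, hm⟩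
  obtain ⟨e, heS⟩ := hSne
  have hfex : ∃ f, f ∉ S := by
    by_contra hc
    push_neg at hc
    exact hSuniv (Finset.eq_univ_iff_forall.mpr hc)
  obtain ⟨f, hfS⟩ := hfex
  have hef : e ≠ f := fun h => hfS (h ▸ heS)
  obtain ⟨a, ha⟩ := hcover e
  obtain ⟨b, hb⟩ := hcover f
  rcases le_or_gt (a : ℕ) (b : ℕ) with hab | hab
  · obtain ⟨B, hB, heB, hfB, hpre⟩ := exists_base_dd hdisj h0 h1 ha hef
    have hswap := fun X => inter_swap (n := n) (X := X) heB hfB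
    have hB' : NestedBase n k C dd (insert f (B.erase e)) := by
      rw [base_iff hdisj]
      constructor
      · have hthis := hswap (Pp C k)
        rw [hpre k] at hthis
        have hePk : e ∈ Pp C k := by rw [Pp_k hcover]; exact Finset.mem_univ e
        have hfPk : f ∈ Pp C k := by rw [Pp_k hcover]; exact Finset.mem_univ f
        rw [if_pos hePk, if_pos hfPk] at hthis
        have hBPk : (insert f (B.erase e)) ∩ Pp C k = insert f (B.erase e) := by
          rw [Pp_k hcover, Finset.inter_univ]
        rw [hBPk] at hthis
        omega
      · intro j hj
        have hthis := hswap (Pp C j)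
        rw [hpre j] at hthis
        have hePj : e ∈ Pp C j ↔ (a : ℕ) < j := mem_Pp_iff hdisj ha
        have hfPj : f ∈ Pp C j ↔ (b : ℕ) < j := mem_Pp_iff hdisj hb
        by_cases hbj : (b : ℕ) < j
        · rw [if_pos (hePj.mpr (by omega)), if_pos (hfPj.mpr hbj)] at hthis
          omega
        · rw [if_neg (fun hc => hbj (hfPj.mp hc))] at hthis
          split_ifs at hthis <;> omega
    have h1' := hm B hB
    have h2' := hm _ hB'
    have hthis := hswap S
    rw [if_pos heS, if_neg hfS, h1', h2'] at hthis
    omega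
  · obtain ⟨B, hB, hfB, heB, hpre⟩ := exists_base_dd hdisj h0 h1 hb (Ne.symm hef)
    have hswap := fun X => inter_swap (n := n) (X := X) hfB heB
    have hB' : NestedBase n k C dd (insert e (B.erase f)) := by
      rw [base_iff hdisj]
      constructor
      · have hthis := hswap (Pp C k)
        rw [hpre k] at hthis
        have hePk : e ∈ Pp C k := by rw [Pp_k hcover]; exact Finset.mem_univ e
        have hfPk : f ∈ Pp C k := by rw [Pp_k hcover]; exact Finset.mem_univ f
        rw [if_pos hePk, if_pos hfPk] at hthis
        have hBPk : (insert e (B.erase f)) ∩ Pp C k = insert e (B.erase f) := by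
          rw [Pp_k hcover, Finset.inter_univ]
        rw [hBPk] at hthis
        omega
      · intro j hj
        have hthis := hswap (Pp C j)
        rw [hpre j] at hthis
        have hePj : e ∈ Pp C j ↔ (a : ℕ) < j := mem_Pp_iff hdisj ha
        have hfPj : f ∈ Pp C j ↔ (b : ℕ) < j := mem_Pp_iff hdisj hb
        by_cases haj : (a : ℕ) < j
        · rw [if_pos (hfPj.mpr (by omega)), if_pos (hePj.mpr haj)] at hthis
          omega
        · rw [if_neg (fun hc => haj (hePj.mp hc))] at hthis
          split_ifs at hthis <;> omega
    have h1' := hm B hB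
    have h2' := hm _ hB'
    have hthis := hswap S
    rw [if_neg hfS, if_pos heS, h1', h2'] at hthis
    omega

-- MORE
end St5

/-- for a loop- and coloop-free partition matroid with connected
components `C 0, …, C (k-1)` of ranks `dd`, the associated nested matroid `M`
is connected, and its cyclic flats are exactly the `k+1` prefix unions
∅, C_1, C_1∪C_2, …, [n], of ranks 0, d_1, d_1+d_2, …, d. -/
theorem stmt5 (n k : ℕ) (hk : 0 < k) (C : Fin k → Finset (Fin n)) (dd : Fin k → ℕ)
    (hdisj : ∀ a b : Fin k, a ≠ b → Disjoint (C a) (C b))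
    (hcover : ∀ i : Fin n, ∃ ℓ, i ∈ C ℓ)
    (h0 : ∀ ℓ, 0 < dd ℓ) (h1 : ∀ ℓ, dd ℓ < (C ℓ).card) :
    NestedConnected n k C dd ∧
    (∀ A : Finset (Fin n),
      (NestedFlat n k C dd A ∧ NestedCyclic n k C dd A) ↔
        ∃ h : ℕ, h ≤ k ∧
          A = (Finset.univ.filter (fun ℓ : Fin k => (ℓ : ℕ) < h)).biUnion C) ∧
    (∀ h : ℕ, h ≤ k →
      NestedRank n k C dd
          ((Finset.univ.filter (fun ℓ : Fin k => (ℓ : ℕ) < h)).biUnion C)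
        = ∑ ℓ ∈ Finset.univ.filter (fun ℓ : Fin k => (ℓ : ℕ) < h), dd ℓ) := by
  have h1' : ∀ ℓ, dd ℓ ≤ (C ℓ).card := fun ℓ => le_of_lt (h1 ℓ)
  refine ⟨St5.connected hdisj hcover h0 h1, fun A => ?_, fun h hh => ?_⟩
  · have hiff := St5.cyclic_flat_iff hdisj hcover h0 h1 A
    simpa only [St5.Pp] using hiff
  · have hrk := St5.rank_Pp hdisj hcover h1' (h := h) hh
    simpa only [St5.Pp, St5.Dp] using hrk
end

section
/- Let M be a matroid of rank d on ground set E with connected components C_1, …, C_c. Then the matroid (base) polytope P(M) ⊆ ℝ^E has dimension |E| − c. -/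
def IsSeparator {n : ℕ} (M : Matroid (Fin n)) (S : Set (Fin n)) : Prop :=
  ∃ m : ℕ, ∀ B, M.IsBase B → (B ∩ S).ncard = m

namespace Stmt10

variable {n : ℕ} (M : Matroid (Fin n))

/-- single basis exchange relation -/
def Xch (e f : Fin n) : Prop :=
  ∃ B, M.IsBase B ∧ e ∈ B ∧ f ∉ B ∧ M.IsBase (insert f (B \ {e}))

def Rel (e f : Fin n) : Prop := Xch M e f ∨ Xch M f e

variable {M}

lemma rel_symm {e f : Fin n} (h : Rel M e f) : Rel M f e := Or.symm h

/-- Cardinality bookkeeping for one exchange step. -/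
lemma xch_ncard {e f : Fin n} {S : Set (Fin n)} (hef : Xch M e f)
    (heS : e ∈ S ↔ f ∈ S) :
    ∀ B, M.IsBase B → e ∈ B → f ∉ B →
      ((insert f (B \ {e})) ∩ S).ncard = (B ∩ S).ncard := by
  intro B _ heB hfB
  have hne : e ≠ f := fun h => hfB (h ▸ heB)
  by_cases hfS : f ∈ S
  · have heS' : e ∈ S := heS.mpr hfS
    have h1 : (insert f (B \ {e})) ∩ S = insert f ((B ∩ S) \ {e}) := by
      rw [Set.insert_inter_of_mem hfS]; congr 1; ext x
      simp only [Set.mem_inter_iff, Set.mem_diff, Set.mem_singleton_iff]; tauto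
    rw [h1, Set.ncard_insert_of_notMem (by simp [hfB]),
      Set.ncard_diff_singleton_of_mem (Set.mem_inter heB heS')]
    have hpos : 0 < (B ∩ S).ncard := by
      rw [Set.ncard_pos]; exact ⟨e, Set.mem_inter heB heS'⟩
    omega
  · have heS' : e ∉ S := fun h => hfS (heS.mp h)
    have h1 : (insert f (B \ {e})) ∩ S = B ∩ S := by
      rw [Set.insert_inter_of_notMem hfS]; ext x
      simp only [Set.mem_inter_iff, Set.mem_diff, Set.mem_singleton_iff]
      constructor
      · rintro ⟨⟨h1, _⟩, h2⟩; exact ⟨h1, h2⟩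
      · rintro ⟨h1, h2⟩; exact ⟨⟨h1, fun h => heS' (h ▸ h2)⟩, h2⟩
    rw [h1]

/-- A set closed under `Rel` is a separator. -/
lemma sep_of_closed {K : Set (Fin n)} (hK : ∀ a b, Rel M a b → (a ∈ K ↔ b ∈ K)) :
    IsSeparator M K := by
  obtain ⟨B₀, hB₀⟩ := M.exists_isBase
  refine ⟨(B₀ ∩ K).ncard, fun B hB => ?_⟩
  suffices h : ∀ k (B B' : Set (Fin n)), M.IsBase B → M.IsBase B' → (B \ B').ncard = k →
      (B ∩ K).ncard = (B' ∩ K).ncard from h _ B B₀ hB hB₀ rfl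
  intro k
  induction k using Nat.strong_induction_on with
  | _ k ih =>
    intro B B' hB hB' hcard
    rcases Set.eq_empty_or_nonempty (B \ B') with hemp | ⟨e, he⟩
    · rw [hB.eq_of_subset_isBase hB' (Set.diff_eq_empty.mp hemp)]
    · obtain ⟨f, hf, hB''⟩ := hB.exchange hB' he
      have hx : Xch M e f := ⟨B, hB, he.1, hf.2, hB''⟩
      have hK' := hK e f (Or.inl hx)
      have hstep := xch_ncard hx hK' B hB he.1 hf.2
      have hd : (insert f (B \ {e})) \ B' = (B \ B') \ {e} := by
        ext x
        simp only [Set.mem_diff, Set.mem_insert_iff, Set.mem_singleton_iff]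
        constructor
        · rintro ⟨h1 | ⟨h1, h2⟩, h3⟩
          · exact absurd (h1 ▸ hf.1) h3
          · exact ⟨⟨h1, h3⟩, h2⟩
        · rintro ⟨⟨h1, h2⟩, h3⟩; exact ⟨Or.inr ⟨h1, h3⟩, h2⟩
      have hlt : ((insert f (B \ {e})) \ B').ncard < k := by
        rw [hd, Set.ncard_diff_singleton_of_mem he, ← hcard]
        have : 0 < (B \ B').ncard := by
          rw [Set.ncard_pos]; exact ⟨e, he⟩
        omega
      rw [← hstep]
      exact ih _ hlt _ _ hB'' hB' rfl

/-- A separator is closed under `Xch`. -/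
lemma closed_of_sep_xch {S : Set (Fin n)} (hS : IsSeparator M S) {e f : Fin n}
    (hef : Xch M e f) : e ∈ S ↔ f ∈ S := by
  obtain ⟨m, hm⟩ := hS
  obtain ⟨B, hB, heB, hfB, hB''⟩ := hef
  have h1 := hm B hB
  have h2 := hm _ hB''
  have hne : e ≠ f := fun h => hfB (h ▸ heB)
  by_cases heS : e ∈ S <;> by_cases hfS : f ∈ S
  · simp [heS, hfS]
  · exfalso
    have h3 : (insert f (B \ {e})) ∩ S = (B ∩ S) \ {e} := by
      rw [Set.insert_inter_of_notMem hfS]; ext x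
      simp only [Set.mem_inter_iff, Set.mem_diff, Set.mem_singleton_iff]; tauto
    rw [h3, Set.ncard_diff_singleton_of_mem (Set.mem_inter heB heS), h1] at h2
    have : 0 < (B ∩ S).ncard := by
      rw [Set.ncard_pos]; exact ⟨e, Set.mem_inter heB heS⟩
    omega
  · exfalso
    have h3 : (insert f (B \ {e})) ∩ S = insert f (B ∩ S) := by
      rw [Set.insert_inter_of_mem hfS]; congr 1; ext x
      simp only [Set.mem_inter_iff, Set.mem_diff, Set.mem_singleton_iff]
      constructor
      · rintro ⟨⟨h1, _⟩, h2⟩; exact ⟨h1, h2⟩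
      · rintro ⟨h1, h2⟩; exact ⟨⟨h1, fun h => heS (h ▸ h2)⟩, h2⟩
    rw [h3, Set.ncard_insert_of_notMem (by simp [hfB]), h1] at h2
    omega
  · simp [heS, hfS]

lemma closed_of_sep {S : Set (Fin n)} (hS : IsSeparator M S) {e f : Fin n}
    (hef : Relation.EqvGen (Rel M) e f) : e ∈ S ↔ f ∈ S := by
  induction hef with
  | rel a b h =>
    exact h.elim (fun h => closed_of_sep_xch hS h) (fun h => (closed_of_sep_xch hS h).symm)
  | refl a => rfl
  | symm a b _ ih => exact ih.symm
  | trans a b c _ _ ih1 ih2 => exact ih1.trans ih2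



variable (M) in
/-- the `Rel`-equivalence class of `e` -/
def cls (e : Fin n) : Set (Fin n) := {f | Relation.EqvGen (Rel M) e f}

lemma mem_cls_self (e : Fin n) : e ∈ cls M e := Relation.EqvGen.refl e

lemma cls_eq_of {e e' : Fin n} (h : Relation.EqvGen (Rel M) e e') :
    cls M e = cls M e' := by
  ext f
  exact ⟨fun hf => (Relation.EqvGen.symm _ _ h).trans _ _ _ hf,
    fun hf => h.trans _ _ _ hf⟩

lemma cls_sep (e : Fin n) : IsSeparator M (cls M e) := by
  apply sep_of_closed
  intro a b hab
  exact ⟨fun ha => ha.trans _ _ _ (Relation.EqvGen.rel _ _ hab),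
    fun hb => hb.trans _ _ _ (Relation.EqvGen.rel _ _ (rel_symm hab))⟩

/-- the property of being a connected component -/
def Comp (M : Matroid (Fin n)) (S : Set (Fin n)) : Prop :=
  S.Nonempty ∧ IsSeparator M S ∧ ∀ T ⊂ S, T.Nonempty → ¬ IsSeparator M T

lemma comp_cls (e : Fin n) : Comp M (cls M e) := by
  refine ⟨⟨e, mem_cls_self e⟩, cls_sep e, fun T hT ⟨t, ht⟩ hTsep => ?_⟩
  obtain ⟨u, hu, huT⟩ := Set.exists_of_ssubset hT
  have htu : Relation.EqvGen (Rel M) t u :=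
    (Relation.EqvGen.symm _ _ (hT.subset ht)).trans _ _ _ hu
  exact huT ((closed_of_sep hTsep htu).mp ht)

lemma comp_eq_cls {S : Set (Fin n)} (hS : Comp M S) {e : Fin n} (he : e ∈ S) :
    S = cls M e := by
  obtain ⟨hne, hsep, hmin⟩ := hS
  have hsub : cls M e ⊆ S := fun f hf => (closed_of_sep hsep hf).mp he
  rcases eq_or_ne (cls M e) S with h | h
  · exact h.symm
  · exact absurd (cls_sep e) (hmin _ (hsub.ssubset_of_ne h) ⟨e, mem_cls_self e⟩)

variable (M) in
abbrev Q := Quotient (Relation.EqvGen.setoid (Rel M))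

lemma card_comp_eq : Nat.card {S : Set (Fin n) // Comp M S} = Nat.card (Q M) := by
  symm
  apply Nat.card_eq_of_bijective
    (Quotient.lift (fun e => (⟨cls M e, comp_cls e⟩ : {S : Set (Fin n) // Comp M S}))
      (fun a b hab => Subtype.ext (cls_eq_of hab)))
  constructor
  · intro q q'
    induction q using Quotient.inductionOn with
    | _ a =>
    induction q' using Quotient.inductionOn with
    | _ b =>
    intro h
    have : b ∈ cls M a := by
      rw [show cls M a = cls M b from congrArg Subtype.val h]
      exact mem_cls_self b
    exact Quotient.sound this
  · rintro ⟨S, hS⟩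
    obtain ⟨e, he⟩ := hS.1
    exact ⟨Quotient.mk _ e, Subtype.ext (comp_eq_cls hS he).symm⟩


noncomputable instance : Fintype (Q M) := Fintype.ofFinite _

open Classical in
variable (M) in
/-- summing coordinates over each class -/
noncomputable def L : (Fin n → ℝ) →ₗ[ℝ] (Q M → ℝ) where
  toFun y q := ∑ e : Fin n, if Quotient.mk _ e = q then y e else 0
  map_add' x y := funext fun q => by
    dsimp only [Pi.add_apply]
    rw [← Finset.sum_add_distrib]
    exact Finset.sum_congr rfl fun e _ => by split <;> simp
  map_smul' c x := funext fun q => by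
    dsimp only [Pi.smul_apply, RingHom.id_apply]
    simp only [smul_eq_mul, Finset.mul_sum]
    exact Finset.sum_congr rfl fun e _ => by split <;> simp

lemma fiber_eq (q : Q M) :
    {f : Fin n | Quotient.mk (Relation.EqvGen.setoid (Rel M)) f = q} = cls M q.out := by
  ext f
  simp only [Set.mem_setOf_eq, cls]
  rw [← Quotient.out_eq q, Quotient.eq, Quotient.out_eq]
  exact ⟨fun h => Relation.EqvGen.symm _ _ h, fun h => Relation.EqvGen.symm _ _ h⟩

open Classical in
lemma L_indicator (B : Set (Fin n)) (q : Q M) :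
    L M (B.indicator fun _ => (1 : ℝ)) q = ((B ∩ cls M q.out).ncard : ℝ) := by
  have h1 : L M (B.indicator fun _ => (1 : ℝ)) q
      = ∑ e : Fin n, if (e ∈ B ∧ Quotient.mk (Relation.EqvGen.setoid (Rel M)) e = q)
          then (1 : ℝ) else 0 := by
    show (∑ e : Fin n, if Quotient.mk (Relation.EqvGen.setoid (Rel M)) e = q
        then (B.indicator fun _ => (1:ℝ)) e else 0) = _
    refine Finset.sum_congr rfl fun e _ => ?_
    rw [Set.indicator_apply]
    by_cases h1 : Quotient.mk (Relation.EqvGen.setoid (Rel M)) e = q <;>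
      by_cases h2 : e ∈ B <;> simp [h1, h2]
  have h2 : (Finset.univ.filter fun e : Fin n =>
      e ∈ B ∧ Quotient.mk (Relation.EqvGen.setoid (Rel M)) e = q)
      = (B ∩ cls M q.out).toFinset := by
    ext e
    simp only [Finset.mem_filter, Finset.mem_univ, true_and, Set.mem_toFinset,
      Set.mem_inter_iff]
    rw [← fiber_eq]
    simp
  rw [h1, Finset.sum_boole, h2, Set.ncard_eq_toFinset_card']

open Classical in
lemma L_surj : Function.Surjective (L M) := by
  intro x
  have hx := pi_eq_sum_univ x
  have hmem : ∀ q : Q M, (fun j => if q = j then (1 : ℝ) else 0) ∈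
      Set.range (L M) := by
    intro q
    refine ⟨Pi.single q.out 1, funext fun q' => ?_⟩
    show (∑ e : Fin n, if Quotient.mk _ e = q' then Pi.single q.out (1:ℝ) e else 0) = _
    rw [Finset.sum_eq_single q.out]
    · simp only [Pi.single_eq_same, Quotient.out_eq]
    · intro b _ hb
      simp [Pi.single_eq_of_ne hb]
    · simp
  have : x ∈ LinearMap.range (L M) := by
    rw [hx]
    exact Submodule.sum_mem _ fun q _ =>
      Submodule.smul_mem _ _ (hmem q)
  exact this

variable (M) in
/-- the set of indicator vectors of bases -/
def bSet : Set (Fin n → ℝ) :=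
  {x | ∃ B, M.IsBase B ∧ x = B.indicator (fun _ => (1 : ℝ))}

lemma single_diff_mem {e f : Fin n} (h : Relation.EqvGen (Rel M) e f) :
    (Pi.single f 1 - Pi.single e 1 : Fin n → ℝ) ∈ vectorSpan ℝ (bSet M) := by
  induction h with
  | rel a b hab =>
    have key : ∀ a b : Fin n, Xch M a b →
        (Pi.single b 1 - Pi.single a 1 : Fin n → ℝ) ∈ vectorSpan ℝ (bSet M) := by
      intro a b ⟨B, hB, haB, hbB, hB''⟩
      have hne : a ≠ b := fun h => hbB (h ▸ haB)
      have heq : ((insert b (B \ {a})).indicator (fun _ => (1:ℝ)))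
          - B.indicator (fun _ => (1:ℝ))
          = Pi.single b 1 - Pi.single a 1 := by
        funext x
        simp only [Pi.sub_apply, Set.indicator_apply]
        rcases eq_or_ne x b with rfl | hxb
        · simp [hbB, Pi.single_eq_same, Pi.single_eq_of_ne hne.symm]
        · rcases eq_or_ne x a with rfl | hxa
          · simp [haB, Pi.single_eq_of_ne hne, Pi.single_eq_same,
              Set.mem_insert_iff, hne, hne.symm, Set.mem_diff]
          · have : x ∈ insert b (B \ {a}) ↔ x ∈ B := by
              simp [Set.mem_insert_iff, hxb, Set.mem_diff, hxa]
            by_cases hxB : x ∈ B <;>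
              simp [Pi.single_eq_of_ne hxb, Pi.single_eq_of_ne hxa, this, hxB]
      rw [← heq]
      exact vsub_mem_vectorSpan ℝ ⟨_, hB'', rfl⟩ ⟨_, hB, rfl⟩
    rcases hab with hab | hab
    · exact key a b hab
    · have := key b a hab
      have h2 : (Pi.single b 1 - Pi.single a 1 : Fin n → ℝ)
          = -(Pi.single a 1 - Pi.single b 1) := by ring_nf
      rw [h2]
      exact Submodule.neg_mem _ this
  | refl a => simp
  | symm a b _ ih =>
    have h2 : (Pi.single a 1 - Pi.single b 1 : Fin n → ℝ)
        = -(Pi.single b 1 - Pi.single a 1) := by ring_nf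
    rw [h2]
    exact Submodule.neg_mem _ ih
  | trans a b c _ _ ih1 ih2 =>
    have h2 : (Pi.single c 1 - Pi.single a 1 : Fin n → ℝ)
        = (Pi.single c 1 - Pi.single b 1) + (Pi.single b 1 - Pi.single a 1) := by ring_nf
    rw [h2]
    exact Submodule.add_mem _ ih2 ih1

open Classical in
lemma span_eq_ker : vectorSpan ℝ (bSet M) = LinearMap.ker (L M) := by
  apply le_antisymm
  · rw [vectorSpan_def, Submodule.span_le]
    rintro v ⟨x, hx, y, hy, rfl⟩
    obtain ⟨B, hB, rfl⟩ := hx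
    obtain ⟨B', hB', rfl⟩ := hy
    rw [SetLike.mem_coe, LinearMap.mem_ker]
    funext q
    have hsep := cls_sep (M := M) (Quotient.out q)
    obtain ⟨m, hm⟩ := hsep
    show L M (_ - _) q = 0
    rw [map_sub]
    show L M _ q - L M _ q = 0
    rw [L_indicator, L_indicator, hm B hB, hm B' hB', sub_self]
  · intro y hy
    rw [LinearMap.mem_ker] at hy
    have hrep : y = ∑ e : Fin n, y e •
        ((Pi.single e 1 : Fin n → ℝ) - Pi.single (Quotient.mk _ e : Q M).out 1) := by
      have h1 : ∑ e : Fin n, y e • (Pi.single e (1:ℝ) : Fin n → ℝ) = y := by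
        funext j
        simp [Finset.sum_apply, Pi.single_apply]
      have h2 : ∑ e : Fin n, y e •
          (Pi.single (Quotient.mk (Relation.EqvGen.setoid (Rel M)) e : Q M).out (1:ℝ)
            : Fin n → ℝ) = 0 := by
        rw [← Finset.sum_fiberwise Finset.univ
          (fun e => (Quotient.mk (Relation.EqvGen.setoid (Rel M)) e : Q M))
          (fun e => y e • (Pi.single (Quotient.mk (Relation.EqvGen.setoid (Rel M)) e
            : Q M).out (1:ℝ) : Fin n → ℝ))]
        refine Finset.sum_eq_zero fun q _ => ?_
        have : ∑ e ∈ Finset.univ.filter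
            (fun e => (Quotient.mk (Relation.EqvGen.setoid (Rel M)) e : Q M) = q),
            y e • (Pi.single (Quotient.mk (Relation.EqvGen.setoid (Rel M)) e
              : Q M).out (1:ℝ) : Fin n → ℝ)
            = (∑ e ∈ Finset.univ.filter
            (fun e => (Quotient.mk (Relation.EqvGen.setoid (Rel M)) e : Q M) = q), y e)
              • (Pi.single q.out (1:ℝ) : Fin n → ℝ) := by
          rw [Finset.sum_smul]
          refine Finset.sum_congr rfl fun e he => ?_
          rw [(Finset.mem_filter.mp he).2]
        rw [this]
        have hLy : (∑ e ∈ Finset.univ.filter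
            (fun e => (Quotient.mk (Relation.EqvGen.setoid (Rel M)) e : Q M) = q), y e)
            = L M y q := by
          show _ = ∑ e : Fin n, if Quotient.mk _ e = q then y e else 0
          exact Finset.sum_filter _ _
        rw [hLy, hy]
        simp
      calc y = ∑ e : Fin n, y e • (Pi.single e (1:ℝ) : Fin n → ℝ) := h1.symm
        _ = ∑ e : Fin n, y e • ((Pi.single e 1 : Fin n → ℝ)
              - Pi.single (Quotient.mk _ e : Q M).out 1) := by
            rw [← sub_zero (∑ e : Fin n, y e • (Pi.single e (1:ℝ) : Fin n → ℝ)), ← h2,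
              ← Finset.sum_sub_distrib]
            exact Finset.sum_congr rfl fun e _ => by rw [← smul_sub]
    rw [hrep]
    refine Submodule.sum_mem _ fun e _ => Submodule.smul_mem _ _ ?_
    apply single_diff_mem
    exact @Quotient.mk_out _ (Relation.EqvGen.setoid (Rel M)) e


end Stmt10

/-- if a matroid M on ground set [n] has c connected components
(= minimal nonempty separators), then its base polytope, the convex hull of
the characteristic vectors of the bases, has dimension n − c. -/
theorem stmt10 (n c : ℕ) (M : Matroid (Fin n)) (hE : M.E = Set.univ)
    (hc : c = Nat.card {S : Set (Fin n) // S.Nonempty ∧ IsSeparator M S ∧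
        ∀ T ⊂ S, T.Nonempty → ¬ IsSeparator M T}) :
    Module.finrank ℝ
        (vectorSpan ℝ {x : Fin n → ℝ | ∃ B, M.IsBase B ∧
          x = B.indicator (fun _ => (1 : ℝ))})
      = n - c := by
  classical
  have hc' : c = Fintype.card (Stmt10.Q M) := by
    rw [hc, ← Nat.card_eq_fintype_card, ← Stmt10.card_comp_eq]
    rfl
  have hV : vectorSpan ℝ {x : Fin n → ℝ | ∃ B, M.IsBase B ∧
      x = B.indicator (fun _ => (1 : ℝ))} = LinearMap.ker (Stmt10.L M) :=
    Stmt10.span_eq_ker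
  rw [hV]
  have hrn := LinearMap.finrank_range_add_finrank_ker (Stmt10.L M)
  have hrange : LinearMap.range (Stmt10.L M) = ⊤ :=
    LinearMap.range_eq_top.mpr Stmt10.L_surj
  rw [hrange, finrank_top] at hrn
  rw [Module.finrank_fintype_fun_eq_card, Module.finrank_fintype_fun_eq_card,
    Fintype.card_fin] at hrn
  have hle : Fintype.card (Stmt10.Q M) ≤ n := by
    have hsurj : Function.Surjective
        (Quotient.mk (Relation.EqvGen.setoid (Stmt10.Rel M))) :=
      fun q => ⟨q.out, q.out_eq⟩
    have := Fintype.card_le_of_surjective _ hsurj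
    rwa [Fintype.card_fin] at this
  omega
end

section
/- Let N be a loop- and coloop-free partition matroid of rank d on [n] with connected components C_1, …, C_k (ranks d_ℓ, 0 < d_ℓ < |C_ℓ|). For each permutation σ of [k], let M_σ be the nested matroid with bases the d-sets S satisfying Σ_{ℓ=1}^h |S ∩ C_{σ(ℓ)}| ≤ Σ_{ℓ=1}^h d_{σ(ℓ)} for all h < k. Then the union over all cyclic shifts σ of the identity (σ = cyclic rotations of (1,…,k)) of the base polytopes P(M_σ) equals the whole hypersimplex Δ(d,n); that is, every d-subset of [n] is a basis of M_σ for some cyclic rotation σ. -/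
open Finset
open Fin.NatCast

/-- The cycle lemma: a periodic integer sequence with zero sum over a period
admits a starting point from which all partial sums are nonpositive. -/
lemma cycle_lemma_aux (k : ℕ) (hk : 0 < k) (f : ℕ → ℤ)
    (hper : ∀ j, f (j + k) = f j)
    (hsum : ∑ j ∈ range k, f j = 0) :
    ∃ t < k, ∀ h ≤ k, ∑ j ∈ range h, f (j + t) ≤ 0 := by
  set G : ℕ → ℤ := fun m => ∑ j ∈ range m, f j with hG
  have hGadd : ∀ a b, G (a + b) = G a + ∑ j ∈ range b, f (a + j) := by
    intro a b; simpa [hG] using Finset.sum_range_add f a b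
  have hGper : ∀ m, G (m + k) = G m := by
    intro m
    have h1 : G (m + k) = G (k + m) := by rw [Nat.add_comm]
    rw [h1, hGadd k m]
    have h2 : ∑ j ∈ range m, f (k + j) = ∑ j ∈ range m, f j := by
      apply Finset.sum_congr rfl; intro j _
      rw [Nat.add_comm, hper]
    rw [h2]
    simp [hG, hsum]
  obtain ⟨t, htmem, htmax⟩ := Finset.exists_max_image (range k) G ⟨0, mem_range.mpr hk⟩
  refine ⟨t, mem_range.mp htmem, fun h hh => ?_⟩
  have key : ∑ j ∈ range h, f (j + t) = G (t + h) - G t := by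
    rw [hGadd t h]
    have : ∑ j ∈ range h, f (t + j) = ∑ j ∈ range h, f (j + t) := by
      apply Finset.sum_congr rfl; intro j _; rw [Nat.add_comm]
    rw [this]; ring
  rw [key]
  have hle : G (t + h) ≤ G t := by
    rcases lt_or_ge (t + h) k with hc | hc
    · exact htmax _ (mem_range.mpr hc)
    · have ht : t < k := mem_range.mp htmem
      have hm : t + h - k < k := by omega
      have : G (t + h) = G (t + h - k) := by
        have e : t + h = (t + h - k) + k := by omega
        conv_lhs => rw [e]
        rw [hGper]
      rw [this]
      exact htmax _ (mem_range.mpr hm)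
  linarith

/-- for a loop- and coloop-free partition matroid with
components `C 0, …, C (k-1)` of ranks `dd`, every d-subset `S` of [n]
(d = ∑ dd) is a basis of the nested matroid `M_σ` for some cyclic rotation σ
of the order (C 0, …, C (k-1)); i.e. the base polytopes of the k cyclic
rotations cover the hypersimplex Δ(d,n). -/
theorem stmt15 (n k : ℕ) (hk : 0 < k) (C : Fin k → Finset (Fin n))
    (dd : Fin k → ℕ)
    (hdisj : ∀ a b : Fin k, a ≠ b → Disjoint (C a) (C b))
    (hcover : ∀ i : Fin n, ∃ ℓ, i ∈ C ℓ)
    (h0 : ∀ ℓ, 0 < dd ℓ) (h1 : ∀ ℓ, dd ℓ < (C ℓ).card)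
    (S : Finset (Fin n)) (hS : S.card = (∑ ℓ, dd ℓ)) :
    ∃ t : Fin k, ∀ h : ℕ, h < k →
      (∑ ℓ ∈ Finset.univ.filter (fun ℓ : Fin k => (ℓ : ℕ) < h),
          (S ∩ C (ℓ + t)).card)
        ≤ ∑ ℓ ∈ Finset.univ.filter (fun ℓ : Fin k => (ℓ : ℕ) < h), dd (ℓ + t) := by
  haveI : NeZero k := ⟨hk.ne'⟩
  -- the deficiency function
  set F : Fin k → ℤ := fun ℓ => ((S ∩ C ℓ).card : ℤ) - dd ℓ with hF
  set f : ℕ → ℤ := fun j => F ((j : ℕ) : Fin k) with hf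
  -- S is partitioned by the C ℓ
  have hpart : S.card = ∑ ℓ : Fin k, (S ∩ C ℓ).card := by
    have hun : S = Finset.univ.biUnion (fun ℓ => S ∩ C ℓ) := by
      ext i
      simp only [mem_biUnion, mem_univ, true_and, mem_inter]
      constructor
      · intro hi; obtain ⟨ℓ, hℓ⟩ := hcover i; exact ⟨ℓ, hi, hℓ⟩
      · rintro ⟨ℓ, hi, _⟩; exact hi
    conv_lhs => rw [hun]
    exact Finset.card_biUnion (fun a _ b _ hab =>
      (hdisj a b hab).mono inter_subset_right inter_subset_right)
  -- periodicity and zero sum of f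
  have hper : ∀ j, f (j + k) = f j := by
    intro j
    simp only [hf]
    congr 1
    push_cast
    simp [Fin.natCast_self]
  have hsum0 : ∑ j ∈ range k, f j = 0 := by
    have h1 : ∑ j ∈ range k, f j = ∑ ℓ : Fin k, F ℓ := by
      rw [← Fin.sum_univ_eq_sum_range (fun j => f j) k]
      apply Finset.sum_congr rfl
      intro ℓ _
      simp [hf, Fin.cast_val_eq_self]
    rw [h1, hF]
    rw [Finset.sum_sub_distrib, ← Nat.cast_sum, ← Nat.cast_sum, ← hpart, hS]
    simp
  obtain ⟨t, htk, ht⟩ := cycle_lemma_aux k hk f hper hsum0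
  refine ⟨⟨t, htk⟩, fun h hh => ?_⟩
  have hrot := ht h hh.le
  -- rewrite the rotated partial sum
  have himg : Finset.univ.filter (fun ℓ : Fin k => (ℓ : ℕ) < h)
      = (range h).image (fun j => ((j : ℕ) : Fin k)) := by
    ext ℓ
    simp only [mem_filter, mem_univ, true_and, mem_image, mem_range]
    constructor
    · intro hℓ; exact ⟨(ℓ : ℕ), hℓ, Fin.cast_val_eq_self ℓ⟩
    · rintro ⟨j, hj, rfl⟩
      have : ((j : Fin k) : ℕ) = j := by
        simp [Fin.val_natCast, Nat.mod_eq_of_lt (hj.trans hh)]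
      omega
  have hinj : ∀ x ∈ range h, ∀ y ∈ range h,
      ((x : ℕ) : Fin k) = ((y : ℕ) : Fin k) → x = y := by
    intro x hx y hy hxy
    have hx' := mem_range.mp hx
    have hy' := mem_range.mp hy
    have : (((x : ℕ) : Fin k) : ℕ) = (((y : ℕ) : Fin k) : ℕ) := by rw [hxy]
    simpa [Fin.val_natCast, Nat.mod_eq_of_lt (hx'.trans hh),
      Nat.mod_eq_of_lt (hy'.trans hh)] using this
  have hsum_eq : ∀ (g : Fin k → ℤ),
      ∑ ℓ ∈ Finset.univ.filter (fun ℓ : Fin k => (ℓ : ℕ) < h), g ℓ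
        = ∑ j ∈ range h, g ((j : ℕ) : Fin k) := by
    intro g
    rw [himg, Finset.sum_image hinj]
  -- translate the goal to integers
  rw [← Nat.cast_le (α := ℤ)]
  push_cast
  have htcast : ((t : ℕ) : Fin k) = ⟨t, htk⟩ := by
    ext; simp [Fin.val_natCast, Nat.mod_eq_of_lt htk]
  have hfin : ∀ j, f (j + t) = F ((j : Fin k) + ⟨t, htk⟩) := by
    intro j
    simp only [hf]
    congr 1
    push_cast
    rw [htcast]
  have key : ∑ j ∈ range h, f (j + t)
      = (∑ ℓ ∈ Finset.univ.filter (fun ℓ : Fin k => (ℓ : ℕ) < h),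
          ((S ∩ C (ℓ + ⟨t, htk⟩)).card : ℤ))
        - ∑ ℓ ∈ Finset.univ.filter (fun ℓ : Fin k => (ℓ : ℕ) < h),
            (dd (ℓ + ⟨t, htk⟩) : ℤ) := by
    rw [← Finset.sum_sub_distrib]
    rw [hsum_eq (fun ℓ => ((S ∩ C (ℓ + ⟨t, htk⟩)).card : ℤ) - (dd (ℓ + ⟨t, htk⟩) : ℤ))]
    apply Finset.sum_congr rfl
    intro j _
    rw [hfin j]
  linarith [hrot, key.symm.le, key.le]
end

section
/- The number of 2-splits of the hypersimplex Δ(d,n) (equivalently, of loop- and coloop-free partition matroids of rank d on [n] with exactly 2 connected components, since for k=2 the (k−1)! factor is 1) equals (1/2) Σ_{α=2}^{n−2} C(n,α) · μ(α), where μ(α) is the number of pairs (x_1, x_2) of positive integers with x_1 + x_2 = d, x_1 < α, x_2 < n − α. -/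
namespace Stmt17Aux

variable (n d : ℕ)

/-- the complementary datum -/
def pc (p : Finset (Fin n) × ℕ) : Finset (Fin n) × ℕ := (p.1ᶜ, d - p.2)

/-- the finset of ordered split data -/
def O : Finset (Finset (Fin n) × ℕ) :=
  ((Finset.univ : Finset (Finset (Fin n))) ×ˢ Finset.range (d+1)).filter
    (fun p => 0 < p.2 ∧ p.2 < p.1.card ∧ p.2 < d ∧ d - p.2 < p.1ᶜ.card)

/-- pairing map -/
def g (p : Finset (Fin n) × ℕ) : Finset (Finset (Fin n) × ℕ) := {p, pc n d p}

/-- the finset of rank pairs -/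
def M (α : ℕ) : Finset (ℕ × ℕ) :=
  (Finset.range (d+1) ×ˢ Finset.range (d+1)).filter
    (fun x => 0 < x.1 ∧ 0 < x.2 ∧ x.1 + x.2 = d ∧ x.1 < α ∧ x.2 < n - α)

lemma mem_O {p : Finset (Fin n) × ℕ} :
    p ∈ O n d ↔ 0 < p.2 ∧ p.2 < p.1.card ∧ p.2 < d ∧ d - p.2 < p.1ᶜ.card := by
  simp only [O, Finset.mem_filter, Finset.mem_product, Finset.mem_univ, true_and,
    Finset.mem_range]
  omega

lemma pc_mem_O {p : Finset (Fin n) × ℕ} (hp : p ∈ O n d) : pc n d p ∈ O n d := by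
  rw [mem_O] at hp ⊢
  simp only [pc, compl_compl]
  omega

lemma pc_pc {p : Finset (Fin n) × ℕ} (hp : p ∈ O n d) : pc n d (pc n d p) = p := by
  rw [mem_O] at hp
  simp only [pc, compl_compl]
  rw [Prod.ext_iff]
  refine ⟨rfl, ?_⟩
  simp only
  omega

lemma pc_ne {p : Finset (Fin n) × ℕ} (hp : p ∈ O n d) : p ≠ pc n d p := by
  rw [mem_O] at hp
  intro h
  have h1 : p.1 = p.1ᶜ := congrArg Prod.fst h
  have hne : p.1.Nonempty := Finset.card_pos.mp (by omega)
  obtain ⟨a, ha⟩ := hne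
  have : a ∈ p.1ᶜ := h1 ▸ ha
  simp [Finset.mem_compl] at this
  exact this ha

lemma fiber_eq {p : Finset (Fin n) × ℕ} (hp : p ∈ O n d) :
    (O n d).filter (fun a => g n d a = g n d p) = {p, pc n d p} := by
  ext a
  simp only [Finset.mem_filter, Finset.mem_insert, Finset.mem_singleton]
  constructor
  · rintro ⟨ha, hg⟩
    have : a ∈ g n d p := by
      rw [← hg]; simp [g]
    simpa [g, Finset.mem_insert, Finset.mem_singleton] using this
  · rintro (rfl | rfl)
    · exact ⟨hp, rfl⟩
    · refine ⟨pc_mem_O n d hp, ?_⟩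
      simp only [g, pc_pc n d hp]
      exact Finset.pair_comm _ _

end Stmt17Aux

open Stmt17Aux in
/-- the number of 2-splits of Δ(d,n) — i.e. of unordered data
{(C₁,x₁),(C₂,x₂)} with C₂ = [n]−C₁ and ranks 0 < x_i < |C_i|, x₁+x₂ = d —
equals (1/2)·∑_{α=2}^{n−2} C(n,α)·μ(α), where μ(α) counts pairs of positive
integers (x₁,x₂) with x₁+x₂ = d, x₁ < α, x₂ < n−α. Stated without division:
twice the number of unordered data equals the sum. -/
theorem stmt17 (n d : ℕ) (hd : 0 < d) (hdn : d < n) :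
    2 * Nat.card {P : Finset (Finset (Fin n) × ℕ) //
        ∃ p q : Finset (Fin n) × ℕ, P = {p, q} ∧ p ≠ q ∧ q.1 = p.1ᶜ ∧
          0 < p.2 ∧ p.2 < p.1.card ∧ 0 < q.2 ∧ q.2 < q.1.card ∧
          p.2 + q.2 = d}
      = ∑ α ∈ Finset.Icc 2 (n - 2), n.choose α *
          Nat.card {x : ℕ × ℕ // 0 < x.1 ∧ 0 < x.2 ∧ x.1 + x.2 = d ∧
            x.1 < α ∧ x.2 < n - α} := by
  -- Step 1: LHS subtype equals image of O under g
  have hcardcompl : ∀ C : Finset (Fin n), Cᶜ.card = n - C.card := by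
    intro C
    rw [Finset.card_compl, Fintype.card_fin]
  have hS : Nat.card {P : Finset (Finset (Fin n) × ℕ) //
      ∃ p q : Finset (Fin n) × ℕ, P = {p, q} ∧ p ≠ q ∧ q.1 = p.1ᶜ ∧
        0 < p.2 ∧ p.2 < p.1.card ∧ 0 < q.2 ∧ q.2 < q.1.card ∧
        p.2 + q.2 = d} = ((O n d).image (g n d)).card := by
    rw [← Nat.card_eq_finsetCard]
    apply Nat.card_congr
    apply Equiv.subtypeEquivRight
    intro P
    constructor
    · rintro ⟨p, q, rfl, hne, hq1, hp2, hpc, hq2, hqc, hsum⟩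
      rw [Finset.mem_image]
      refine ⟨p, ?_, ?_⟩
      · rw [mem_O]
        refine ⟨hp2, hpc, by omega, ?_⟩
        rw [← hq1]
        have : d - p.2 = q.2 := by omega
        rw [this]; exact hqc
      · have : pc n d p = q := by
          simp only [pc, Prod.ext_iff]
          exact ⟨hq1.symm, by omega⟩
        simp [g, this]
    · intro hP
      rw [Finset.mem_image] at hP
      obtain ⟨p, hp, rfl⟩ := hP
      have hp' := (mem_O n d).mp hp
      refine ⟨p, pc n d p, rfl, pc_ne n d hp, rfl, hp'.1, hp'.2.1, by
        simp only [pc]; omega, ?_, ?_⟩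
      · simpa [pc] using hp'.2.2.2
      · simp only [pc]; omega
  -- Step 2: 2 * image card = O card
  have hO2 : (O n d).card = 2 * ((O n d).image (g n d)).card := by
    rw [Finset.card_eq_sum_card_fiberwise
      (f := g n d) (t := (O n d).image (g n d))
      (fun a ha => Finset.mem_image_of_mem _ ha)]
    rw [Finset.sum_congr rfl (fun b hb => ?_), Finset.sum_const, smul_eq_mul,
      mul_comm]
    obtain ⟨p, hp, rfl⟩ := Finset.mem_image.mp hb
    rw [fiber_eq n d hp, Finset.card_pair (pc_ne n d hp)]
  -- Step 3: O card = the sum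
  have hμ : ∀ α, Nat.card {x : ℕ × ℕ // 0 < x.1 ∧ 0 < x.2 ∧ x.1 + x.2 = d ∧
      x.1 < α ∧ x.2 < n - α} = (M n d α).card := by
    intro α
    rw [← Nat.card_eq_finsetCard]
    apply Nat.card_congr
    apply Equiv.subtypeEquivRight
    intro x
    simp only [M, Finset.mem_filter, Finset.mem_product, Finset.mem_range]
    omega
  have hOcard : (O n d).card = ∑ α ∈ Finset.Icc 2 (n - 2),
      n.choose α * (M n d α).card := by
    rw [Finset.card_eq_sum_card_fiberwise
      (f := fun p => p.1.card) (t := Finset.Icc 2 (n - 2)) ?mem]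
    case mem =>
      intro p hp
      have hp' := (mem_O n d).mp hp
      have hc := hcardcompl p.1
      have hn : p.1.card ≤ n := by
        simpa [Fintype.card_fin] using Finset.card_le_univ p.1
      rw [Finset.mem_coe, Finset.mem_Icc]
      show 2 ≤ p.1.card ∧ p.1.card ≤ n - 2
      omega
    refine Finset.sum_congr rfl (fun α hα => ?_)
    have : ((O n d).filter (fun p => p.1.card = α)).card
        = ((Finset.powersetCard α (Finset.univ : Finset (Fin n))) ×ˢ M n d α).card := by
      apply Finset.card_nbij' (i := fun p => (p.1, (p.2, d - p.2)))
        (j := fun x => (x.1, x.2.1))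
      · intro p hp
        simp only [Finset.mem_coe, Finset.mem_filter] at hp
        obtain ⟨hp, hcα⟩ := hp
        have hcα' : p.1.card = α := hcα
        have hp' := (mem_O n d).mp hp
        have hc := hcardcompl p.1
        simp only [Finset.mem_coe, Finset.mem_product, Finset.mem_powersetCard, M,
          Finset.mem_filter, Finset.mem_range]
        refine ⟨⟨Finset.subset_univ _, hcα⟩, ?_⟩
        omega
      · intro x hx
        simp only [Finset.mem_coe, Finset.mem_product, Finset.mem_powersetCard, M,
          Finset.mem_filter, Finset.mem_range] at hx
        obtain ⟨⟨_, hcα⟩, hm⟩ := hx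
        simp only [Finset.mem_coe, Finset.mem_filter, mem_O]
        have hc := hcardcompl x.1
        refine ⟨?_, hcα⟩
        omega
      · intro p hp; rfl
      · rintro ⟨C, a, b⟩ hx
        simp only [Finset.mem_coe, Finset.mem_product, Finset.mem_powersetCard, M,
          Finset.mem_filter, Finset.mem_range] at hx
        have hb : d - a = b := by omega
        simp [hb]
    rw [this, Finset.card_product, Finset.card_powersetCard]
    simp [Fintype.card_fin]
  rw [hS, ← hO2, hOcard]
  exact Finset.sum_congr rfl (fun α _ => by rw [hμ])
end
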